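/- Let α, β be commutative ring elements and define Q_n by Q_0(x)=1, Q_1(x)=x-α, Q_n(x)=(x-α)Q_{n-1}(x)-βx Q_{n-2}(x). Then the coefficient array of the Q_n is the Riordan array (1/(1+αx), x(1-βx)/(1+αx)): that is, for each n, the coefficient of x^k in Q_n equals the coefficient of x^n in (1/(1+αx)) · (x(1-βx)/(1+αx))^k. -/

import Mathlib

/-- The coefficient array of the Laurent biorthogonal polynomials `Q_n` with
`Q_0 = 1`, `Q_1 = x - α`, `Q_n = (x-α)Q_{n-1} - βx Q_{n-2}` is the Riordan array
`(1/(1+αx), x(1-βx)/(1+αx))`. -/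
theorem laurent_biorthogonal_coeff_array' {R : Type*} [CommRing R] (α β : R)
    (Q : ℕ → Polynomial R)
    (hQ0 : Q 0 = 1)
    (hQ1 : Q 1 = Polynomial.X - Polynomial.C α)
    (hQrec : ∀ n, Q (n + 2) =
      (Polynomial.X - Polynomial.C α) * Q (n + 1) - Polynomial.C β * Polynomial.X * Q n) :
    ∀ n k : ℕ, (Q n).coeff k =
      PowerSeries.coeff n
        ((PowerSeries.invOfUnit (1 + PowerSeries.C α * PowerSeries.X) 1) *
          (PowerSeries.X * (1 - PowerSeries.C β * PowerSeries.X) *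
            PowerSeries.invOfUnit (1 + PowerSeries.C α * PowerSeries.X) 1) ^ k) := by
  set d : PowerSeries R := 1 + PowerSeries.C α * PowerSeries.X with hd
  set g : PowerSeries R := PowerSeries.invOfUnit d 1 with hg
  have hdg : d * g = 1 := PowerSeries.mul_invOfUnit d 1 (by simp [hd])
  set h : PowerSeries R := PowerSeries.X * (1 - PowerSeries.C β * PowerSeries.X) * g with hh
  have hg0 : PowerSeries.constantCoeff g = 1 := by
    simp [hg, PowerSeries.constantCoeff_invOfUnit]
  have hh0 : PowerSeries.constantCoeff h = 0 := by
    simp [hh]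
  have hkey : ∀ k : ℕ, d * (g * h ^ (k + 1)) =
      PowerSeries.X * (g * h ^ k) -
        PowerSeries.C β * (PowerSeries.X * (PowerSeries.X * (g * h ^ k))) := by
    intro k
    have h1 : d * (g * h ^ (k + 1)) = (d * g) * (h * h ^ k) := by ring
    rw [h1, hdg, one_mul, hh]
    ring
  have hcd : ∀ (m : ℕ) (F : PowerSeries R),
      PowerSeries.coeff (m + 1) (d * F) =
        PowerSeries.coeff (m + 1) F + α * PowerSeries.coeff m F := by
    intro m F
    rw [hd, add_mul, one_mul, map_add, mul_assoc, PowerSeries.coeff_C_mul,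
      PowerSeries.coeff_succ_X_mul]
  intro n
  induction' n using Nat.twoStepInduction with n ih1 ih2
  · intro k
    rw [hQ0]
    rcases k with _ | k
    · simp [← PowerSeries.coeff_zero_eq_constantCoeff_apply, map_mul, map_pow, hg0, hh0]
    · simp [← PowerSeries.coeff_zero_eq_constantCoeff_apply, map_mul, map_pow, hg0, hh0,
        Polynomial.coeff_one]
  · intro k
    rw [hQ1]
    have hg1 : PowerSeries.coeff 1 g = -α := by
      have h2 := congrArg (PowerSeries.coeff 1) hdg
      rw [hcd 0 g] at h2
      simp only [PowerSeries.coeff_one, PowerSeries.coeff_zero_eq_constantCoeff_apply, hg0,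
        mul_one, one_ne_zero, if_false] at h2
      linear_combination h2
    have hpow : ∀ m : ℕ, h ^ m =
        PowerSeries.X ^ m * ((1 - PowerSeries.C β * PowerSeries.X) * g) ^ m := by
      intro m
      rw [hh, show PowerSeries.X * (1 - PowerSeries.C β * PowerSeries.X) * g =
        PowerSeries.X * ((1 - PowerSeries.C β * PowerSeries.X) * g) from by ring, mul_pow]
    rcases k with _ | k
    · simpa using hg1.symm
    rcases k with _ | k
    · have h3 : g * h ^ 1 =
          PowerSeries.X * ((1 - PowerSeries.C β * PowerSeries.X) * (g * g)) := by
        rw [hpow, pow_one, pow_one]; ring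
      rw [h3, PowerSeries.coeff_succ_X_mul, PowerSeries.coeff_zero_eq_constantCoeff_apply]
      simp only [map_mul, map_sub, map_one, PowerSeries.constantCoeff_X,
        PowerSeries.constantCoeff_C, mul_zero, sub_zero, hg0, mul_one, one_mul]
      simp [Polynomial.coeff_X]
    · have h4 : g * h ^ (k + 2) =
          PowerSeries.X ^ (k + 2) *
            (g * ((1 - PowerSeries.C β * PowerSeries.X) * g) ^ (k + 2)) := by
        rw [hpow]; ring
      rw [h4, PowerSeries.coeff_X_pow_mul']
      have hk2 : ¬ (k + 2 ≤ 1) := by omega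
      rw [if_neg hk2]
      have : (1 : ℕ) ≠ k + 2 := by omega
      simp [Polynomial.coeff_X, this]
  · intro k
    rw [hQrec n]
    rcases k with _ | k
    · -- k = 0
      have hrhs : PowerSeries.coeff (n + 2) (g * h ^ 0) =
          -α * PowerSeries.coeff (n + 1) (g * h ^ 0) := by
        have h5 := congrArg (PowerSeries.coeff (n + 2)) hdg
        rw [show (n + 2) = (n + 1) + 1 from rfl, hcd (n + 1) g, PowerSeries.coeff_one] at h5
        simp only [pow_zero, mul_one, Nat.succ_ne_zero, if_false] at h5 ⊢
        linear_combination h5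
      rw [hrhs, ← ih2 0]
      simp [Polynomial.coeff_sub, Polynomial.mul_coeff_zero, Polynomial.coeff_C_mul]
    · -- k = k + 1
      have h6 := congrArg (PowerSeries.coeff (n + 2)) (hkey k)
      rw [show (n + 2) = (n + 1) + 1 from rfl, hcd (n + 1) (g * h ^ (k + 1))] at h6
      rw [map_sub, PowerSeries.coeff_succ_X_mul, PowerSeries.coeff_C_mul,
        PowerSeries.coeff_succ_X_mul, PowerSeries.coeff_succ_X_mul] at h6
      have lhs : ((Polynomial.X - Polynomial.C α) * Q (n + 1)
            - Polynomial.C β * Polynomial.X * Q n).coeff (k + 1) =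
          (Q (n + 1)).coeff k - α * (Q (n + 1)).coeff (k + 1) - β * (Q n).coeff k := by
        rw [Polynomial.coeff_sub, sub_mul, Polynomial.coeff_sub,
          Polynomial.coeff_X_mul, Polynomial.coeff_C_mul, mul_assoc,
          Polynomial.coeff_C_mul, Polynomial.coeff_X_mul]
      rw [lhs, ih2 k, ih2 (k + 1), ih1 k]
      linear_combination -h6
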